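/- For every natural number n, C(2n,n) * ∑_{k=0}^{n} C(n,k)^2 C(2k,k) C(2n-2k,n-k) = ∑_{k=0}^{n} C(2n,2k) C(2k,k)^2 C(2n-2k,n-k)^2. -/

import Mathlib

lemma key (n k : ℕ) (h : k ≤ n) :
    (2 * n).choose n * (n.choose k) ^ 2 =
      (2 * n).choose (2 * k) * ((2 * k).choose k) * ((2 * n - 2 * k).choose (n - k)) := by
  have hpos : 0 < (k.factorial * (n - k).factorial) ^ 2 := by positivity
  apply Nat.eq_of_mul_eq_mul_right hpos
  have h1 : n.choose k * k.factorial * (n - k).factorial = n.factorial :=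
    Nat.choose_mul_factorial_mul_factorial h
  have h2 : (2 * n).choose n * n.factorial * (2 * n - n).factorial = (2 * n).factorial :=
    Nat.choose_mul_factorial_mul_factorial (by omega)
  have h3 : (2 * k).choose k * k.factorial * (2 * k - k).factorial = (2 * k).factorial :=
    Nat.choose_mul_factorial_mul_factorial (by omega)
  have h4 : (2 * n - 2 * k).choose (n - k) * (n - k).factorial *
      (2 * n - 2 * k - (n - k)).factorial = (2 * n - 2 * k).factorial :=
    Nat.choose_mul_factorial_mul_factorial (by omega)
  have h5 : (2 * n).choose (2 * k) * (2 * k).factorial * (2 * n - 2 * k).factorial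
      = (2 * n).factorial := Nat.choose_mul_factorial_mul_factorial (by omega)
  have e1 : 2 * n - n = n := by omega
  have e2 : 2 * k - k = k := by omega
  have e3 : 2 * n - 2 * k - (n - k) = n - k := by omega
  rw [e1] at h2; rw [e2] at h3; rw [e3] at h4
  calc (2 * n).choose n * n.choose k ^ 2 * (k.factorial * (n - k).factorial) ^ 2
      = (2 * n).choose n * ((n.choose k * k.factorial * (n - k).factorial) *
        (n.choose k * k.factorial * (n - k).factorial)) := by ring
    _ = (2 * n).choose n * n.factorial * n.factorial := by rw [h1]; ring
    _ = (2 * n).factorial := by rw [← h2]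
    _ = (2 * n).choose (2 * k) * (2 * k).factorial * (2 * n - 2 * k).factorial := h5.symm
    _ = (2 * n).choose (2 * k) * ((2 * k).choose k * k.factorial * k.factorial) *
        ((2 * n - 2 * k).choose (n - k) * (n - k).factorial * (n - k).factorial) := by
        rw [h3, h4]
    _ = (2 * n).choose (2 * k) * (2 * k).choose k * (2 * n - 2 * k).choose (n - k) *
        (k.factorial * (n - k).factorial) ^ 2 := by ring

theorem stmt_6 (n : ℕ) :
    ((2 * n).choose n) *
        ∑ k ∈ Finset.range (n + 1),
          (n.choose k) ^ 2 * ((2 * k).choose k) * ((2 * n - 2 * k).choose (n - k)) =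
      ∑ k ∈ Finset.range (n + 1),
        ((2 * n).choose (2 * k)) * ((2 * k).choose k) ^ 2 *
          ((2 * n - 2 * k).choose (n - k)) ^ 2 := by
  rw [Finset.mul_sum]
  refine Finset.sum_congr rfl fun k hk => ?_
  have hkn : k ≤ n := Nat.lt_succ_iff.mp (Finset.mem_range.mp hk)
  have := key n k hkn
  calc (2 * n).choose n * (n.choose k ^ 2 * (2 * k).choose k * (2 * n - 2 * k).choose (n - k))
      = ((2 * n).choose n * n.choose k ^ 2) *
        ((2 * k).choose k * (2 * n - 2 * k).choose (n - k)) := by ring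
    _ = ((2 * n).choose (2 * k) * (2 * k).choose k * (2 * n - 2 * k).choose (n - k)) *
        ((2 * k).choose k * (2 * n - 2 * k).choose (n - k)) := by rw [this]
    _ = (2 * n).choose (2 * k) * (2 * k).choose k ^ 2 *
        (2 * n - 2 * k).choose (n - k) ^ 2 := by ring
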